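/- Let n ≥ 1, λ ≥ 1, 0 < c ≤ 1. Let p_0 be a standard Gaussian random vector in ℝⁿ and let (ξ_t)_{t∈ℕ} be i.i.d. ℝⁿ-valued random vectors, independent of p_0, each distributed as the vector (N_{1:λ}, N_2, …, N_n) with independent coordinates, first coordinate distributed as the minimum of λ i.i.d. standard normals and the other n−1 coordinates standard normal. Define the cumulative path by p_{t+1} = (1−c) p_t + √(c(2−c)) ξ_t. Then lim_{t→∞} E([p_t]_1²) = 2((1−c)/c) · E(N_{1:λ})² + E(N_{1:λ}²). -/

import Mathlib

open MeasureTheory ProbabilityTheory Filter Real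

/-- Law of the minimum (first order statistic) of `lam` i.i.d. standard normal
random variables. -/
noncomputable def minLaw (lam : ℕ) : Measure ℝ :=
  (Measure.pi fun _ : Fin lam => gaussianReal 0 1).map fun x => ⨅ i, x i

instance (lam : ℕ) : IsProbabilityMeasure (minLaw lam) := by
  unfold minLaw
  exact Measure.isProbabilityMeasure_map
    ((Measurable.iInf fun i => measurable_pi_apply i).aemeasurable)

/-- Law of the selected step `(N_{1:λ}, N_2, …, N_n)`: independent coordinates, the
first coordinate distributed as the minimum of `lam` i.i.d. standard normals and the
other `n - 1` coordinates standard normal. -/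
noncomputable def xiLaw (n lam : ℕ) : Measure (Fin n → ℝ) :=
  Measure.pi fun i => if (i : ℕ) = 0 then minLaw lam else gaussianReal 0 1


lemma aux_map_eval_pi {ι : Type*} [Fintype ι] {α : ι → Type*} [∀ i, MeasurableSpace (α i)]
    (μ : ∀ i, Measure (α i)) [∀ i, IsProbabilityMeasure (μ i)] (i : ι) :
    (Measure.pi μ).map (fun x => x i) = μ i := by
  classical
  ext s hs
  rw [Measure.map_apply (measurable_pi_apply i) hs]
  have h : (fun x : ∀ j, α j => x i) ⁻¹' s
      = Set.univ.pi (Function.update (fun j => (Set.univ : Set (α j))) i s) :=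
    Set.eval_preimage
  rw [h, Measure.pi_pi]
  rw [Fintype.prod_eq_single i (fun j hj => by
    rw [Function.update_of_ne hj]; exact measure_univ)]
  rw [Function.update_self]

lemma aux_integrable_sq_gaussian : Integrable (fun x : ℝ => x ^ 2) (gaussianReal 0 1) := by
  rw [gaussianReal_of_var_ne_zero 0 one_ne_zero]
  rw [integrable_withDensity_iff (measurable_gaussianPDF 0 1)
    (ae_of_all _ fun x => ENNReal.ofReal_lt_top)]
  have h : ∀ x : ℝ, x ^ 2 * (gaussianPDF 0 1 x).toReal
      = (Real.sqrt (2 * π))⁻¹ * (x ^ ((2 : ℕ) : ℝ) * rexp (-(2⁻¹) * x ^ 2)) := by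
    intro x
    rw [gaussianPDF, ENNReal.toReal_ofReal (gaussianPDFReal_nonneg _ _ _), gaussianPDFReal]
    rw [Real.rpow_natCast]
    simp only [NNReal.coe_one, mul_one, sub_zero]
    rw [show (-x ^ 2 / 2 : ℝ) = -(2⁻¹) * x ^ 2 from by ring]
    ring
  simp_rw [h]
  exact (integrable_rpow_mul_exp_neg_mul_sq (by norm_num) (by norm_num)).const_mul _

lemma aux_memℒp_gaussian : MemLp (id : ℝ → ℝ) 2 (gaussianReal 0 1) :=
  (memLp_two_iff_integrable_sq aestronglyMeasurable_id).2 aux_integrable_sq_gaussian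

lemma aux_memℒp_minLaw' (lam : ℕ) (hlam : 1 ≤ lam) :
    MemLp (fun x : Fin lam → ℝ => ⨅ i, x i) 2 (Measure.pi fun _ => gaussianReal 0 1) := by
  haveI : Nonempty (Fin lam) := Fin.pos_iff_nonempty.1 hlam
  have hmeas : Measurable fun x : Fin lam → ℝ => ⨅ i, x i :=
    Measurable.iInf fun i => measurable_pi_apply i
  have hcoord : ∀ i : Fin lam,
      MemLp (fun x : Fin lam → ℝ => x i) 2 (Measure.pi fun _ => gaussianReal 0 1) := by
    intro i
    have h1 : Measure.map (fun x : Fin lam → ℝ => x i)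
        (Measure.pi fun _ => gaussianReal 0 1) = gaussianReal 0 1 :=
      aux_map_eval_pi _ i
    have h2 := aux_memℒp_gaussian
    rw [← h1] at h2
    exact (memLp_map_measure_iff aestronglyMeasurable_id
      (measurable_pi_apply i).aemeasurable).1 h2
  have hsum : MemLp (fun x : Fin lam → ℝ => ∑ i, |x i|) 2
      (Measure.pi fun _ => gaussianReal 0 1) := by
    apply memLp_finset_sum _ (fun i _ => ?_)
    have := (hcoord i).norm
    simpa [Real.norm_eq_abs] using this
  refine hsum.of_le hmeas.aestronglyMeasurable (ae_of_all _ fun x => ?_)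
  obtain ⟨j, hj⟩ := Finite.exists_min x
  have hinf : (⨅ i, x i) = x j :=
    le_antisymm (ciInf_le (Finite.bddBelow_range _) j) (le_ciInf hj)
  rw [hinf, Real.norm_eq_abs, Real.norm_eq_abs]
  have h1 : |x j| ≤ ∑ i, |x i| :=
    Finset.single_le_sum (fun i _ => abs_nonneg (x i)) (Finset.mem_univ j)
  have h2 : (0 : ℝ) ≤ ∑ i, |x i| := Finset.sum_nonneg fun i _ => abs_nonneg (x i)
  rw [abs_of_nonneg h2]
  exact h1

lemma aux_tendsto_rec {r : ℝ} (hr0 : 0 ≤ r) (hr1 : r < 1) (u e : ℕ → ℝ)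
    (hu : ∀ t, u (t + 1) = r * u t + e t) (he : Tendsto e atTop (nhds 0)) :
    Tendsto u atTop (nhds 0) := by
  rw [Metric.tendsto_atTop] at he ⊢
  intro ε hε
  obtain ⟨T, hT⟩ := he (ε * (1 - r) / 4) (by nlinarith)
  have key : ∀ k, |u (T + k)| ≤ r ^ k * |u T| + ε / 4 := by
    intro k
    induction k with
    | zero =>
      simp only [pow_zero, one_mul, Nat.add_zero]
      linarith
    | succ k ih =>
      have h2 : |e (T + k)| ≤ ε * (1 - r) / 4 := by
        have := hT (T + k) (Nat.le_add_right _ _)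
        rw [Real.dist_eq, sub_zero] at this
        exact this.le
      have h3 : u (T + (k + 1)) = r * u (T + k) + e (T + k) := by
        rw [show T + (k + 1) = (T + k) + 1 by ring, hu]
      rw [h3]
      calc |r * u (T + k) + e (T + k)| ≤ r * |u (T + k)| + |e (T + k)| := by
            refine (abs_add_le _ _).trans ?_
            rw [abs_mul, abs_of_nonneg hr0]
        _ ≤ r * (r ^ k * |u T| + ε / 4) + ε * (1 - r) / 4 := by
            have := mul_le_mul_of_nonneg_left ih hr0
            linarith
        _ = r ^ (k + 1) * |u T| + ε / 4 := by ring
  obtain ⟨K, hK⟩ := (Metric.tendsto_atTop.1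
    ((tendsto_pow_atTop_nhds_zero_of_lt_one hr0 hr1).const_mul (|u T|)))
    (ε / 4) (by positivity)
  refine ⟨T + K, fun t ht => ?_⟩
  have htT : T ≤ t := le_trans (Nat.le_add_right _ _) ht
  have hk : K ≤ t - T := by omega
  have h4 : |u t| ≤ r ^ (t - T) * |u T| + ε / 4 := by
    have := key (t - T)
    rwa [Nat.add_sub_cancel' htT] at this
  have h5 : r ^ (t - T) * |u T| ≤ r ^ K * |u T| :=
    mul_le_mul_of_nonneg_right (pow_le_pow_of_le_one hr0 hr1.le hk) (abs_nonneg _)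
  have h6 : |u T| * r ^ K < ε / 4 := by
    have h := hK K le_rfl
    rw [Real.dist_eq, mul_zero, sub_zero] at h
    exact lt_of_le_of_lt (le_abs_self _) h
  have h7 : r ^ K * |u T| < ε / 4 := by rw [mul_comm]; exact h6
  rw [Real.dist_eq, sub_zero]
  linarith

/-- For the cumulative path `p_{t+1} = (1−c) p_t + √(c(2−c)) ξ_t`
of the `(1,λ)`-CSA-ES (with `p₀` standard Gaussian, independent of the i.i.d.
selected steps `ξ_t = Z_{t+1}`),
`lim_t E([p_t]₁²) = 2((1−c)/c) E(N_{1:λ})² + E(N_{1:λ}²)`. -/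
theorem stmt_11 {n lam : ℕ} (hn : 1 ≤ n) (hlam : 1 ≤ lam)
    (c : ℝ) (hc0 : 0 < c) (hc1 : c ≤ 1)
    {Ω : Type*} [MeasureSpace Ω] [IsProbabilityMeasure (ℙ : Measure Ω)]
    (Z : ℕ → Ω → (Fin n → ℝ)) (hZmeas : ∀ t, Measurable (Z t))
    (hZindep : iIndepFun Z ℙ)
    (hZ0 : Measure.map (Z 0) ℙ = Measure.pi fun _ : Fin n => gaussianReal 0 1)
    (hZlaw : ∀ t, Measure.map (Z (t + 1)) ℙ = xiLaw n lam)
    (p : ℕ → Ω → (Fin n → ℝ)) (hp0 : p 0 = Z 0)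
    (hprec : ∀ t ω i, p (t + 1) ω i =
      (1 - c) * p t ω i + Real.sqrt (c * (2 - c)) * Z (t + 1) ω i)
    :
    Tendsto (fun t : ℕ => ∫ ω, (p t ω ⟨0, hn⟩) ^ 2 ∂ℙ) atTop
      (nhds (2 * ((1 - c) / c) * (∫ x, x ∂(minLaw lam)) ^ 2 +
        ∫ x, x ^ 2 ∂(minLaw lam))) := by
  classical
  set a : ℝ := 1 - c with ha
  set b : ℝ := Real.sqrt (c * (2 - c)) with hb
  have ha0 : 0 ≤ a := by simp only [ha]; linarith
  have ha1 : a < 1 := by simp only [ha]; linarith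
  have hb2 : b ^ 2 = c * (2 - c) := Real.sq_sqrt (by nlinarith)
  set i0 : Fin n := ⟨0, hn⟩ with hi0
  set m : ℝ := ∫ x, x ∂(minLaw lam) with hm
  set s : ℝ := ∫ x, x ^ 2 ∂(minLaw lam) with hs
  set Y : ℕ → Ω → ℝ := fun k ω => Z k ω i0 with hY
  have hYmeas : ∀ k, Measurable (Y k) := fun k => (measurable_pi_apply i0).comp (hZmeas k)
  have hYindep : iIndepFun Y ℙ :=
    hZindep.comp (fun _ => fun x => x i0) (fun _ => measurable_pi_apply i0)
  set X : ℕ → Ω → ℝ := fun t ω => p t ω i0 with hX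
  -- laws of the coordinates
  haveI : ∀ i : Fin n, IsProbabilityMeasure
      (if (i : ℕ) = 0 then minLaw lam else gaussianReal 0 1) := fun i => by
    split_ifs <;> infer_instance
  have hY0law : Measure.map (Y 0) ℙ = gaussianReal 0 1 := by
    have : Y 0 = (fun x : Fin n → ℝ => x i0) ∘ Z 0 := rfl
    rw [this, ← Measure.map_map (measurable_pi_apply i0) (hZmeas 0), hZ0,
      aux_map_eval_pi]
  have hYlaw : ∀ k, Measure.map (Y (k + 1)) ℙ = minLaw lam := by
    intro k
    have h1 : Y (k + 1) = (fun x : Fin n → ℝ => x i0) ∘ Z (k + 1) := rfl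
    rw [h1, ← Measure.map_map (measurable_pi_apply i0) (hZmeas _), hZlaw, xiLaw,
      aux_map_eval_pi]
    simp [hi0]
  -- L² bounds
  have hminL2 : MemLp (id : ℝ → ℝ) 2 (minLaw lam) := by
    unfold minLaw
    have hmeas : Measurable fun x : Fin lam → ℝ => ⨅ i, x i :=
      Measurable.iInf fun i => measurable_pi_apply i
    rw [memLp_map_measure_iff aestronglyMeasurable_id hmeas.aemeasurable]
    exact aux_memℒp_minLaw' lam hlam
  have hYL2 : ∀ k, MemLp (Y k) 2 ℙ := by
    intro k
    cases k with
    | zero =>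
      have h := aux_memℒp_gaussian
      rw [← hY0law] at h
      exact (memLp_map_measure_iff aestronglyMeasurable_id (hYmeas 0).aemeasurable).1 h
    | succ k =>
      have h := hminL2
      rw [← hYlaw k] at h
      exact (memLp_map_measure_iff aestronglyMeasurable_id (hYmeas _).aemeasurable).1 h
  -- moments of Y (k+1)
  have hYmean : ∀ k, ∫ ω, Y (k + 1) ω ∂ℙ = m := by
    intro k
    rw [hm, ← hYlaw k]
    exact (integral_map (hYmeas _).aemeasurable aestronglyMeasurable_id).symm
  have hYsq : ∀ k, ∫ ω, (Y (k + 1) ω) ^ 2 ∂ℙ = s := by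
    intro k
    rw [hs, ← hYlaw k]
    exact (integral_map (hYmeas _).aemeasurable
      ((measurable_id.pow_const 2).aestronglyMeasurable)).symm
  -- closed form for X
  set coeff : ℕ → ℕ → ℝ := fun t k => if k = 0 then a ^ t else a ^ (t - k) * b with hcoeff
  have hXrec : ∀ t ω, X (t + 1) ω = a * X t ω + b * Y (t + 1) ω := fun t ω => hprec t ω i0
  have hXsum : ∀ t ω, X t ω = ∑ k ∈ Finset.range (t + 1), coeff t k * Y k ω := by
    intro t
    induction t with
    | zero =>
      intro ω
      simp [X, Y, hp0, coeff, Finset.sum_range_one]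
    | succ t ih =>
      intro ω
      rw [hXrec t ω, ih ω,
        Finset.sum_range_succ (f := fun k => coeff (t + 1) k * Y k ω) (n := t + 1),
        Finset.mul_sum]
      congr 1
      · refine Finset.sum_congr rfl fun k hk => ?_
        have hk' : k ≤ t := Nat.lt_succ_iff.mp (Finset.mem_range.mp hk)
        rcases Nat.eq_zero_or_pos k with h0 | hp
        · subst h0
          simp only [coeff, if_pos rfl]
          rw [← mul_assoc, ← pow_succ']
        · have hk0 : k ≠ 0 := hp.ne'
          simp only [coeff, if_neg hk0]
          rw [← mul_assoc, ← mul_assoc, ← pow_succ']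
          congr 3
          omega
      · have h1 : t + 1 ≠ 0 := Nat.succ_ne_zero t
        simp only [coeff, if_neg h1, Nat.sub_self, pow_zero, one_mul]
  -- L² bound for X
  have hXL2 : ∀ t, MemLp (X t) 2 ℙ := by
    intro t
    have h : X t = fun ω => ∑ k ∈ Finset.range (t + 1), coeff t k * Y k ω :=
      funext (hXsum t)
    rw [h]
    exact memLp_finset_sum _ fun k _ => (hYL2 k).const_mul (coeff t k)
  have hXint : ∀ t, Integrable (X t) ℙ := fun t => (hXL2 t).integrable one_le_two
  have hYint : ∀ k, Integrable (Y k) ℙ := fun k => (hYL2 k).integrable one_le_two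
  -- independence of X t and Y (t+1)
  have hindep : ∀ t, IndepFun (X t) (Y (t + 1)) ℙ := by
    intro t
    set g : ℕ → Ω → ℝ := fun k ω => (if k = t + 1 then 1 else coeff t k) * Y k ω with hg
    have hgindep : iIndepFun g ℙ :=
      hYindep.comp (fun k y => (if k = t + 1 then 1 else coeff t k) * y)
        (fun k => (measurable_id.const_mul _))
    have hgmeas : ∀ k, Measurable (g k) := fun k => (hYmeas k).const_mul _
    have h := hgindep.indepFun_finsetSum_of_notMem hgmeas
      (s := Finset.range (t + 1)) (i := t + 1) (by simp)
    have e1 : (∑ j ∈ Finset.range (t + 1), g j) = X t := by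
      funext ω
      rw [Finset.sum_apply, hXsum t ω]
      refine Finset.sum_congr rfl fun j hj => ?_
      have : j ≠ t + 1 := by
        have := Finset.mem_range.mp hj; omega
      simp only [hg, if_neg this]
    have e2 : g (t + 1) = Y (t + 1) := by
      funext ω
      simp [hg]
    rwa [e1, e2] at h
  -- cross-term integrability
  have hXYint : ∀ t, Integrable (fun ω => X t ω * Y (t + 1) ω) ℙ := by
    intro t
    have h := MemLp.smul (hYL2 (t + 1)) (hXL2 t)
      (p := 2) (q := 2) (r := 1)
      (hpqr := ⟨by simp [ENNReal.inv_two_add_inv_two]⟩)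
    have h2 : (X t • Y (t + 1)) = fun ω => X t ω * Y (t + 1) ω := rfl
    rw [h2] at h
    exact h.integrable le_rfl
  -- mean recursion
  have hmean : ∀ t, (∫ ω, X (t + 1) ω ∂ℙ) = a * (∫ ω, X t ω ∂ℙ) + b * m := by
    intro t
    have h1 : ∀ ω, X (t + 1) ω = a * X t ω + b * Y (t + 1) ω := hXrec t
    rw [integral_congr_ae (ae_of_all _ h1)]
    rw [integral_add ((hXint t).const_mul a) ((hYint (t + 1)).const_mul b),
      integral_const_mul, integral_const_mul, hYmean t]
  -- second moment recursion
  have hsq : ∀ t, (∫ ω, (X (t + 1) ω) ^ 2 ∂ℙ)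
      = a ^ 2 * (∫ ω, (X t ω) ^ 2 ∂ℙ) + 2 * a * b * m * (∫ ω, X t ω ∂ℙ) + b ^ 2 * s := by
    intro t
    have h1 : ∀ ω, (X (t + 1) ω) ^ 2
        = a ^ 2 * (X t ω) ^ 2 + (2 * a * b) * (X t ω * Y (t + 1) ω)
          + b ^ 2 * (Y (t + 1) ω) ^ 2 := by
      intro ω
      rw [hXrec t ω]; ring
    rw [integral_congr_ae (ae_of_all _ h1)]
    have hXi : Integrable (fun ω => (X t ω) ^ 2) ℙ := (hXL2 t).integrable_sq
    have hYi : Integrable (fun ω => (Y (t + 1) ω) ^ 2) ℙ := (hYL2 (t + 1)).integrable_sq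
    have hAB : Integrable
        (fun ω => a ^ 2 * (X t ω) ^ 2 + 2 * a * b * (X t ω * Y (t + 1) ω)) ℙ :=
      (hXi.const_mul _).add ((hXYint t).const_mul _)
    rw [integral_add hAB (hYi.const_mul _),
      integral_add (hXi.const_mul _) ((hXYint t).const_mul _),
      integral_const_mul, integral_const_mul, integral_const_mul]
    have hcross : ∫ ω, X t ω * Y (t + 1) ω ∂ℙ
        = (∫ ω, X t ω ∂ℙ) * (∫ ω, Y (t + 1) ω ∂ℙ) := by
      have := (hindep t).integral_fun_mul_eq_mul_integral (hXint t).1 (hYint (t + 1)).1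
      simpa using this
    rw [hcross, hYmean t, hYsq t]
    ring
  -- limits
  set M : ℝ := b * m / c with hM
  set V : ℝ := 2 * ((1 - c) / c) * m ^ 2 + s with hV
  have hc' : c ≠ 0 := hc0.ne'
  have hμ : Tendsto (fun t => ∫ ω, X t ω ∂ℙ) atTop (nhds M) := by
    have hrec : ∀ t, (∫ ω, X (t + 1) ω ∂ℙ) - M = a * ((∫ ω, X t ω ∂ℙ) - M) + 0 := by
      intro t
      rw [hmean t]
      have : a * M + b * m - M = 0 := by
        rw [hM, ha]; field_simp; ring
      linarith [this]
    have h0 := aux_tendsto_rec ha0 ha1 (fun t => (∫ ω, X t ω ∂ℙ) - M) (fun _ => 0)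
      hrec tendsto_const_nhds
    have := h0.add_const M
    simpa using this
  have he2 : Tendsto (fun t => 2 * a * b * m * ((∫ ω, X t ω ∂ℙ) - M)) atTop (nhds 0) := by
    have h1 : Tendsto (fun t => (∫ ω, X t ω ∂ℙ) - M) atTop (nhds 0) := by
      have := hμ.sub_const M
      simpa using this
    have := h1.const_mul (2 * a * b * m)
    simpa using this
  have hfix : a ^ 2 * V + 2 * a * b * m * M + b ^ 2 * s - V = 0 := by
    have h1 : 2 * a * b * m * M = 2 * a * (b ^ 2) * m ^ 2 / c := by
      rw [hM]; ring
    rw [h1, hb2, hV, ha]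
    field_simp
    ring
  have hv : Tendsto (fun t => ∫ ω, (X t ω) ^ 2 ∂ℙ) atTop (nhds V) := by
    have hrec : ∀ t, (∫ ω, (X (t + 1) ω) ^ 2 ∂ℙ) - V
        = a ^ 2 * ((∫ ω, (X t ω) ^ 2 ∂ℙ) - V)
          + 2 * a * b * m * ((∫ ω, X t ω ∂ℙ) - M) := by
      intro t
      rw [hsq t]
      nlinarith [hfix]
    have ha20 : 0 ≤ a ^ 2 := sq_nonneg a
    have ha21 : a ^ 2 < 1 := by nlinarith
    have h0 := aux_tendsto_rec ha20 ha21 (fun t => (∫ ω, (X t ω) ^ 2 ∂ℙ) - V)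
      (fun t => 2 * a * b * m * ((∫ ω, X t ω ∂ℙ) - M)) hrec he2
    have := h0.add_const V
    simpa using this
  exact hv
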